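/- arXiv:0912.3119 — 3 statements merged into one kernel-verified Lean document; each statement's English description precedes it below -/
import Mathlib

section
/- Let λ ≥ 1 and let G ⊂ S^{n×n} be a set of real symmetric n×n matrices satisfying the λ-cone condition. For a ∈ S^{n×n} write π(a) = a − (trace(a)/n)·I for its traceless part. Then the projection π is injective on G, and there is a constant C depending only on n and λ such that for all a, b ∈ G, |trace(a) − trace(b)| ≤ C·‖π(a) − π(b)‖; in particular G is the graph of a Lipschitz function of the traceless part. -/
noncomputable section

open Real Polynomial

attribute [local instance] Matrix.frobeniusNormedAddCommGroup Matrix.frobeniusNormedSpace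

/-- The λ-cone condition for a set `G` of symmetric matrices: for any two distinct
`a b ∈ G` there are `C > 0` and a symmetric positive definite matrix `c` all of whose
eigenvalues lie in `[C/λ, Cλ]` (expressed via its quadratic form) such that
`trace((a-b)·c) = 0`. -/
def ConeCondition (n : ℕ) (lam : ℝ) (G : Set (Matrix (Fin n) (Fin n) ℝ)) : Prop :=
  ∀ a ∈ G, ∀ b ∈ G, a ≠ b →
    ∃ (C : ℝ) (c : Matrix (Fin n) (Fin n) ℝ), 0 < C ∧ c.IsSymm ∧
      (∀ ξ : EuclideanSpace ℝ (Fin n),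
        C / lam * ‖ξ‖ ^ 2 ≤ (∑ i, ∑ j, c i j * ξ i * ξ j) ∧
        (∑ i, ∑ j, c i j * ξ i * ξ j) ≤ C * lam * ‖ξ‖ ^ 2) ∧
      Matrix.trace ((a - b) * c) = 0

/-- The norm associated with the inner product `a·b = trace(ab)` on symmetric matrices:
`‖X‖ = √(trace (X·Xᵀ))`. -/
def frobNorm {n : ℕ} (X : Matrix (Fin n) (Fin n) ℝ) : ℝ :=
  Real.sqrt (Matrix.trace (X * X.transpose))

namespace Stmt4Aux
variable {n : ℕ}


lemma qf_single (c : Matrix (Fin n) (Fin n) ℝ) (k : Fin n) :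
    (∑ i, ∑ j, c i j * (EuclideanSpace.single k (1:ℝ)) i * (EuclideanSpace.single k (1:ℝ)) j)
      = c k k := by
  simp [EuclideanSpace.single_apply, mul_ite, ite_mul, Finset.sum_ite_eq', Finset.sum_ite_eq]

lemma qf_pair (c : Matrix (Fin n) (Fin n) ℝ) (i j : Fin n) (t : ℝ) :
    (∑ k, ∑ l, c k l * (EuclideanSpace.single i (1:ℝ) + EuclideanSpace.single j t) k *
        (EuclideanSpace.single i (1:ℝ) + EuclideanSpace.single j t) l)
      = c i i + t * c i j + t * c j i + t^2 * c j j := by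
  simp only [PiLp.add_apply, EuclideanSpace.single_apply, mul_add, add_mul, mul_ite, ite_mul,
    mul_zero, zero_mul, mul_one, one_mul, Finset.sum_add_distrib, Finset.sum_ite_eq',
    Finset.mem_univ, if_true]
  ring

lemma norm_pair (i j : Fin n) (hij : i ≠ j) (t : ℝ) :
    ‖(EuclideanSpace.single i (1:ℝ) + EuclideanSpace.single j t)‖^2 = 1 + t^2 := by
  rw [norm_add_sq_real]
  simp [EuclideanSpace.norm_single, EuclideanSpace.inner_single_left,
    EuclideanSpace.single_apply, hij.symm, abs_sq]

lemma trace_mul_expand (X Y : Matrix (Fin n) (Fin n) ℝ) :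
    Matrix.trace (X * Y) = ∑ i, ∑ j, X i j * Y j i := by
  simp [Matrix.trace, Matrix.diag, Matrix.mul_apply]

lemma frobNorm_eq (X : Matrix (Fin n) (Fin n) ℝ) :
    frobNorm X = Real.sqrt (∑ i, ∑ j, X i j ^ 2) := by
  simp [frobNorm, trace_mul_expand, Matrix.transpose_apply, sq]

lemma frobNorm_nonneg (X : Matrix (Fin n) (Fin n) ℝ) : 0 ≤ frobNorm X :=
  Real.sqrt_nonneg _

lemma frobNorm_zero : frobNorm (0 : Matrix (Fin n) (Fin n) ℝ) = 0 := by
  simp [frobNorm]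

lemma abs_trace_mul_le (X c : Matrix (Fin n) (Fin n) ℝ) :
    |Matrix.trace (X * c)| ≤ frobNorm X * frobNorm c := by
  have hX : frobNorm X = Real.sqrt (∑ p : Fin n × Fin n, X p.1 p.2 ^ 2) := by
    rw [frobNorm_eq, ← Finset.sum_product']
    rfl
  have hc : frobNorm c = Real.sqrt (∑ p : Fin n × Fin n, c p.2 p.1 ^ 2) := by
    rw [frobNorm_eq]
    congr 1
    rw [← Finset.univ_product_univ, Finset.sum_product]
    exact Finset.sum_comm
  have hT : Matrix.trace (X * c) = ∑ p : Fin n × Fin n, X p.1 p.2 * c p.2 p.1 := by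
    rw [trace_mul_expand, ← Finset.sum_product']
    rfl
  rw [abs_le, hT, hX, hc]
  constructor
  · have h := Real.sum_mul_le_sqrt_mul_sqrt Finset.univ
      (fun p : Fin n × Fin n => -X p.1 p.2) (fun p => c p.2 p.1)
    have h2 : ∑ p : Fin n × Fin n, -X p.1 p.2 * c p.2 p.1
        = -∑ p : Fin n × Fin n, X p.1 p.2 * c p.2 p.1 := by simp
    have h3 : ∑ p : Fin n × Fin n, (-X p.1 p.2) ^ 2
        = ∑ p : Fin n × Fin n, X p.1 p.2 ^ 2 := by simp
    rw [h2, h3] at h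
    linarith
  · exact Real.sum_mul_le_sqrt_mul_sqrt _ _ _

lemma key (lam : ℝ) (hlam : 1 ≤ lam) (d : Matrix (Fin n) (Fin n) ℝ)
    (C0 : ℝ) (c : Matrix (Fin n) (Fin n) ℝ) (hC0 : 0 < C0) (hcs : c.IsSymm)
    (hq : ∀ ξ : EuclideanSpace ℝ (Fin n),
        C0 / lam * ‖ξ‖ ^ 2 ≤ (∑ i, ∑ j, c i j * ξ i * ξ j) ∧
        (∑ i, ∑ j, c i j * ξ i * ξ j) ≤ C0 * lam * ‖ξ‖ ^ 2)
    (htr : Matrix.trace (d * c) = 0) :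
    |Matrix.trace d| ≤ (n:ℝ) * lam^2 *
      frobNorm (d - (Matrix.trace d / (n : ℝ)) • (1 : Matrix (Fin n) (Fin n) ℝ)) := by
  have lpos : (0:ℝ) < lam := lt_of_lt_of_le one_pos hlam
  rcases Nat.eq_zero_or_pos n with hn | hn
  · subst hn
    have : Matrix.trace d = 0 := by simp [Matrix.trace]
    rw [this]
    simpa using mul_nonneg (by positivity) (frobNorm_nonneg _)
  have hnR : (0:ℝ) < (n:ℝ) := by exact_mod_cast hn
  set t := Matrix.trace d with ht
  set P := d - (t / (n : ℝ)) • (1 : Matrix (Fin n) (Fin n) ℝ) with hPdef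
  -- step 1 : trace (P * c) = -(t/n) * trace c
  have step1 : Matrix.trace (P * c) = -(t / n) * Matrix.trace c := by
    rw [hPdef, Matrix.sub_mul, Matrix.smul_mul, Matrix.one_mul, Matrix.trace_sub,
      Matrix.trace_smul, htr]
    simp [smul_eq_mul]
    try ring
  -- diagonal bounds
  have diag_lb : ∀ k, C0 / lam ≤ c k k := by
    intro k
    have h := (hq (EuclideanSpace.single k (1:ℝ))).1
    rw [qf_single] at h
    simpa [EuclideanSpace.norm_single] using h
  have diag_ub : ∀ k, c k k ≤ C0 * lam := by
    intro k
    have h := (hq (EuclideanSpace.single k (1:ℝ))).2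
    rw [qf_single] at h
    simpa [EuclideanSpace.norm_single] using h
  have hCl : 0 < C0 / lam := div_pos hC0 lpos
  have hCl2 : C0 / lam ≤ C0 * lam := by
    rw [div_le_iff₀ lpos]
    have h1 : 1 ≤ lam * lam := by nlinarith
    nlinarith
  -- trace c lower bound
  have trace_lb : (n:ℝ) * (C0 / lam) ≤ Matrix.trace c := by
    have : Matrix.trace c = ∑ k, c k k := by simp [Matrix.trace, Matrix.diag]
    rw [this]
    calc (n:ℝ) * (C0 / lam) = ∑ _k : Fin n, (C0 / lam) := by simp [mul_comm]
    _ ≤ ∑ k, c k k := Finset.sum_le_sum fun k _ => diag_lb k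
  have trace_pos : 0 < Matrix.trace c := lt_of_lt_of_le (by positivity) trace_lb
  -- entrywise bound
  have entry : ∀ k l, |c k l| ≤ C0 * lam := by
    intro k l
    by_cases hkl : k = l
    · subst hkl
      rw [abs_le]
      refine ⟨?_, diag_ub k⟩
      nlinarith [diag_lb k]
    · have hp := (hq (EuclideanSpace.single k (1:ℝ) + EuclideanSpace.single l 1)).2
      have hm := (hq (EuclideanSpace.single k (1:ℝ) + EuclideanSpace.single l (-1))).2
      rw [qf_pair, norm_pair k l hkl] at hp hm
      have hsym : c l k = c k l := hcs.apply k l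
      rw [abs_le]
      norm_num at hp hm
      constructor <;> nlinarith [diag_lb k, diag_lb l]
  -- frobNorm c bound
  have frobc : frobNorm c ≤ (n:ℝ) * (C0 * lam) := by
    rw [frobNorm_eq]
    have hb : (∑ i, ∑ j, c i j ^ 2) ≤ ((n:ℝ) * (C0 * lam))^2 := by
      calc (∑ i, ∑ j : Fin n, c i j ^ 2) ≤ ∑ _i : Fin n, ∑ _j : Fin n, (C0*lam)^2 := by
            refine Finset.sum_le_sum fun i _ => Finset.sum_le_sum fun j _ => ?_
            have := entry i j
            nlinarith [abs_nonneg (c i j), sq_abs (c i j)]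
      _ = ((n:ℝ) * (C0 * lam))^2 := by simp; ring
    calc Real.sqrt (∑ i, ∑ j, c i j ^ 2) ≤ Real.sqrt (((n:ℝ) * (C0 * lam))^2) :=
          Real.sqrt_le_sqrt hb
    _ = (n:ℝ) * (C0 * lam) := Real.sqrt_sq (by positivity)
  -- combine
  have hCS := abs_trace_mul_le P c
  have step2 : |t| / (n:ℝ) * Matrix.trace c ≤ frobNorm P * frobNorm c := by
    have : |Matrix.trace (P * c)| = |t| / n * Matrix.trace c := by
      rw [step1, abs_mul, abs_of_pos trace_pos, abs_neg, abs_div, abs_of_pos hnR]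
    linarith [hCS, this.symm.le, this.le]
  have hF : 0 ≤ frobNorm P := frobNorm_nonneg P
  rw [← mul_le_mul_iff_left₀ hCl]
  calc |t| * (C0 / lam) = (|t| / n) * ((n:ℝ) * (C0 / lam)) := by field_simp
  _ ≤ (|t| / n) * Matrix.trace c := by
        apply mul_le_mul_of_nonneg_left trace_lb (by positivity)
  _ ≤ frobNorm P * frobNorm c := step2
  _ ≤ frobNorm P * ((n:ℝ) * (C0 * lam)) := mul_le_mul_of_nonneg_left frobc hF
  _ = (n:ℝ) * lam^2 * frobNorm P * (C0 / lam) := by field_simp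

end Stmt4Aux

theorem stmt4 (n : ℕ) (lam : ℝ) (hlam : 1 ≤ lam) :
    ∃ C : ℝ, ∀ G : Set (Matrix (Fin n) (Fin n) ℝ),
      (∀ A ∈ G, A.IsSymm) → ConeCondition n lam G →
      Set.InjOn
        (fun a => a - (Matrix.trace a / (n : ℝ)) • (1 : Matrix (Fin n) (Fin n) ℝ)) G ∧
      ∀ a ∈ G, ∀ b ∈ G,
        |Matrix.trace a - Matrix.trace b| ≤
          C * frobNorm ((a - (Matrix.trace a / (n : ℝ)) • (1 : Matrix (Fin n) (Fin n) ℝ)) -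
            (b - (Matrix.trace b / (n : ℝ)) • (1 : Matrix (Fin n) (Fin n) ℝ))) := by
  refine ⟨(n:ℝ) * lam^2, fun G hG hcone => ?_⟩
  have bound : ∀ a ∈ G, ∀ b ∈ G,
      |Matrix.trace a - Matrix.trace b| ≤ (n:ℝ) * lam^2 *
        frobNorm ((a - (Matrix.trace a / (n : ℝ)) • (1 : Matrix (Fin n) (Fin n) ℝ)) -
          (b - (Matrix.trace b / (n : ℝ)) • (1 : Matrix (Fin n) (Fin n) ℝ))) := by
    intro a ha b hb
    by_cases hab : a = b
    · subst hab
      simp [sub_self, Stmt4Aux.frobNorm_zero]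
    · obtain ⟨C0, c, hC0, hcs, hq, htr⟩ := hcone a ha b hb hab
      have hπ : (a - (Matrix.trace a / (n : ℝ)) • (1 : Matrix (Fin n) (Fin n) ℝ)) -
          (b - (Matrix.trace b / (n : ℝ)) • (1 : Matrix (Fin n) (Fin n) ℝ))
          = (a - b) - (Matrix.trace (a - b) / (n : ℝ)) • (1 : Matrix (Fin n) (Fin n) ℝ) := by
        rw [Matrix.trace_sub, sub_div, sub_smul]
        abel
      rw [hπ, show Matrix.trace a - Matrix.trace b = Matrix.trace (a - b) from
        (Matrix.trace_sub a b).symm]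
      exact Stmt4Aux.key lam hlam (a - b) C0 c hC0 hcs hq htr
  refine ⟨?_, bound⟩
  intro a ha b hb h
  simp only at h
  have h0 : (a - (Matrix.trace a / (n : ℝ)) • (1 : Matrix (Fin n) (Fin n) ℝ)) -
      (b - (Matrix.trace b / (n : ℝ)) • (1 : Matrix (Fin n) (Fin n) ℝ)) = 0 :=
    sub_eq_zero_of_eq h
  have hb2 := bound a ha b hb
  rw [h0, Stmt4Aux.frobNorm_zero, mul_zero] at hb2
  have htr : Matrix.trace a = Matrix.trace b :=
    sub_eq_zero.mp (abs_nonpos_iff.mp hb2)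
  have h2 : a - (Matrix.trace b / (n : ℝ)) • (1 : Matrix (Fin n) (Fin n) ℝ)
      = b - (Matrix.trace b / (n : ℝ)) • (1 : Matrix (Fin n) (Fin n) ℝ) := by
    rw [← htr] at h ⊢
    exact h
  exact sub_left_inj.mp h2
end
end

section
/- For every s = (s₀,s₁,s₂,s₃) ∈ ℝ⁴: (1) M_s·M_sᵗ = M_sᵗ·M_s = ‖s‖²·I₄; (2) det(M_s) = −‖s‖⁴; (3) the characteristic polynomial of M_s equals (x² − ‖s‖²)(x² + 2s₀x + ‖s‖²). -/
set_option maxHeartbeats 1600000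

noncomputable section

open Real Polynomial

attribute [local instance] Matrix.frobeniusNormedAddCommGroup Matrix.frobeniusNormedSpace

/-- The 4×4 matrix M_s. -/
def Mmat (s : EuclideanSpace ℝ (Fin 4)) : Matrix (Fin 4) (Fin 4) ℝ :=
  !![s 0, -s 1, -s 2, -s 3;
     -s 1, -s 0, -s 3, s 2;
     -s 2, s 3, -s 0, -s 1;
     -s 3, -s 2, s 1, -s 0]

lemma norm_sq_eq (s : EuclideanSpace ℝ (Fin 4)) :
    ‖s‖ ^ 2 = s 0 ^ 2 + s 1 ^ 2 + s 2 ^ 2 + s 3 ^ 2 := by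
  rw [EuclideanSpace.norm_eq, Real.sq_sqrt (by positivity)]
  simp [Fin.sum_univ_four, sq_abs]

lemma Mmat_transpose (s : EuclideanSpace ℝ (Fin 4)) :
    (Mmat s).transpose =
      !![s 0, -s 1, -s 2, -s 3;
         -s 1, -s 0, s 3, -s 2;
         -s 2, -s 3, -s 0, s 1;
         -s 3, s 2, -s 1, -s 0] := by
  ext i j
  fin_cases i <;> fin_cases j <;> simp [Mmat, Matrix.transpose_apply]

theorem stmt7 (s : EuclideanSpace ℝ (Fin 4)) :
    Mmat s * (Mmat s).transpose = ‖s‖ ^ 2 • (1 : Matrix (Fin 4) (Fin 4) ℝ) ∧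
    (Mmat s).transpose * Mmat s = ‖s‖ ^ 2 • (1 : Matrix (Fin 4) (Fin 4) ℝ) ∧
    (Mmat s).det = -(‖s‖ ^ 4) ∧
    (Mmat s).charpoly =
      (X ^ 2 - C (‖s‖ ^ 2)) * (X ^ 2 + C (2 * s 0) * X + C (‖s‖ ^ 2)) := by
  have h := norm_sq_eq s
  have h4 : ‖s‖ ^ 4 = (‖s‖ ^ 2) ^ 2 := by ring
  refine ⟨?_, ?_, ?_, ?_⟩
  · rw [Mmat_transpose]
    ext i j
    fin_cases i <;> fin_cases j <;>
      (simp [Mmat, Matrix.mul_apply, Fin.sum_univ_four, h, Matrix.one_apply]; try ring)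
  · rw [Mmat_transpose]
    ext i j
    fin_cases i <;> fin_cases j <;>
      (simp [Mmat, Matrix.mul_apply, Fin.sum_univ_four, h, Matrix.one_apply]; try ring)
  · rw [h4, h]
    simp [Mmat, Matrix.det_succ_row_zero, Fin.sum_univ_succ, Fin.succAbove, Fin.castSucc, Fin.castAdd, Fin.castLE]
    ring
  · rw [Matrix.charpoly, h]
    have hc : Matrix.charmatrix (Mmat s) =
        !![X - C (s 0), C (s 1), C (s 2), C (s 3);
           C (s 1), X + C (s 0), C (s 3), - C (s 2);
           C (s 2), - C (s 3), X + C (s 0), C (s 1);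
           C (s 3), C (s 2), - C (s 1), X + C (s 0)] := by
      ext i j
      fin_cases i <;> fin_cases j <;>
        simp [Mmat, Matrix.charmatrix_apply, Matrix.one_apply]
    rw [hc]
    simp [Matrix.det_succ_row_zero, Fin.sum_univ_succ, Fin.succAbove, Fin.castSucc, Fin.castAdd, Fin.castLE, map_add, map_mul, map_pow, map_ofNat]
    ring
end
end

section
/- Let m ∈ ℝ with |m| ≤ 1. Then the polynomial F_m(x) = x³ − 3x − 2m has three real roots x₁ ≥ x₂ ≥ x₃, and: (1) if 0 ≤ m ≤ 1 then √3 ≤ x₁ ≤ 2 and x₃ ≤ −1, and each of the equalities x₁ = 2 and x₃ = −1 implies m = 1; (2) if −1 ≤ m ≤ 0 then −2 ≤ x₃ ≤ −√3 and x₁ ≥ 1, and each of the equalities x₁ = 1 and x₃ = −2 implies m = −1; (3) if |m| ≤ 0.75 then |x₁| > 1.38 and |x₃| > 1.38. -/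
noncomputable section

open Real Polynomial

attribute [local instance] Matrix.frobeniusNormedAddCommGroup Matrix.frobeniusNormedSpace

set_option maxHeartbeats 1000000 in
private lemma aux15 (m c s : ℝ) (hs0 : 0 ≤ s) (hchalf : 1 / 2 ≤ c) (hc1 : c ≤ 1)
    (hpyth : s ^ 2 + c ^ 2 = 1) (hmc : m = 4 * c ^ 3 - 3 * c) :
    ∃ x₁ x₂ x₃ : ℝ, x₂ ≤ x₁ ∧ x₃ ≤ x₂ ∧
      (∀ x : ℝ, x ^ 3 - 3 * x - 2 * m = (x - x₁) * (x - x₂) * (x - x₃)) ∧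
      (0 ≤ m → Real.sqrt 3 ≤ x₁ ∧ x₁ ≤ 2 ∧ x₃ ≤ -1 ∧
        (x₁ = 2 → m = 1) ∧ (x₃ = -1 → m = 1)) ∧
      (m ≤ 0 → -2 ≤ x₃ ∧ x₃ ≤ -Real.sqrt 3 ∧ 1 ≤ x₁ ∧
        (x₁ = 1 → m = -1) ∧ (x₃ = -2 → m = -1)) ∧
      (|m| ≤ 0.75 → 1.38 < |x₁| ∧ 1.38 < |x₃|) := by
  have hr3 : Real.sqrt 3 ^ 2 = 3 := Real.sq_sqrt (by norm_num)
  have hr3' : 0 ≤ Real.sqrt 3 := Real.sqrt_nonneg 3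
  have hkey : 1 ≤ c + Real.sqrt 3 * s := by
    nlinarith [mul_nonneg hr3' hs0, sq_nonneg (Real.sqrt 3 * s - (1 - c))]
  have hkey2 : c + Real.sqrt 3 * s ≤ 2 := by
    nlinarith [sq_nonneg (Real.sqrt 3 * c - s), mul_nonneg hr3' hs0]
  refine ⟨2 * c, -c + Real.sqrt 3 * s, -c - Real.sqrt 3 * s, ?_, ?_, ?_, ?_, ?_, ?_⟩
  · nlinarith [mul_nonneg hr3' hs0]
  · nlinarith [mul_nonneg hr3' hs0]
  · intro x
    rw [hmc]
    linear_combination (3 * x - 6 * c) * hpyth + (x - 2 * c) * s ^ 2 * hr3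
  · -- case 0 ≤ m
    intro hm0
    have h4 : 3 ≤ (2 * c) ^ 2 := by nlinarith [hmc, hchalf, hm0]
    have hcs : Real.sqrt 3 ≤ 2 * c := by
      have h := Real.sqrt_le_sqrt h4
      rwa [Real.sqrt_sq (by linarith)] at h
    refine ⟨by linarith, by linarith, by linarith, ?_, ?_⟩
    · intro h; have : c = 1 := by linarith
      rw [hmc, this]; norm_num
    · intro h
      have he : Real.sqrt 3 * s - (1 - c) = 0 := by linarith
      have h0 : (1 - c) * (2 + 4 * c) = 0 := by
        linear_combination (Real.sqrt 3 * s + (1 - c)) * he - s ^ 2 * hr3 - 3 * hpyth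
      have hc : c = 1 := by
        rcases mul_eq_zero.mp h0 with h1 | h1 <;> linarith
      rw [hmc, hc]; norm_num
  · -- case m ≤ 0
    intro hm0
    have hfc : 4 * c ^ 3 - 3 * c ≤ 0 := by linarith [hmc]
    have h4 : (2 * c) ^ 2 ≤ 3 := by
      by_contra hcon
      push_neg at hcon
      have hp : 0 < c * ((2 * c) ^ 2 - 3) := mul_pos (by linarith) (by linarith)
      nlinarith [hp]
    have hcs : 2 * c ≤ Real.sqrt 3 := by
      have h := Real.sqrt_le_sqrt h4
      rwa [Real.sqrt_sq (by linarith)] at h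
    have hkey3 : Real.sqrt 3 ≤ c + Real.sqrt 3 * s := by
      have h2 : (Real.sqrt 3 - c) ^ 2 ≤ 3 * s ^ 2 := by
        nlinarith [hr3, hpyth, hcs, hchalf, mul_nonneg (by linarith : (0:ℝ) ≤ c) (by linarith : 0 ≤ Real.sqrt 3 - 2 * c)]
      nlinarith [h2, mul_nonneg hr3' hs0, hr3]
    refine ⟨by linarith, by linarith, by linarith, ?_, ?_⟩
    · intro h; have : c = 1 / 2 := by linarith
      rw [hmc, this]; norm_num
    · intro h
      have h2 : c + Real.sqrt 3 * s - 2 = 0 := by linarith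
      have h0 : (Real.sqrt 3 * c - s) ^ 2 = 0 := by
        linear_combination (c ^ 2 + s ^ 2) * hr3 + 4 * hpyth - (c + Real.sqrt 3 * s + 2) * h2
      have he : Real.sqrt 3 * c - s = 0 := sq_eq_zero_iff.mp h0
      have h4 : (2 * c - 1) * (2 * c + 1) = 0 := by
        linear_combination (Real.sqrt 3 * c + s) * he - c ^ 2 * hr3 + hpyth
      have hc : c = 1 / 2 := by
        rcases mul_eq_zero.mp h4 with h1 | h1 <;> linarith
      rw [hmc, hc]; norm_num
  · -- |m| ≤ 0.75
    intro hm34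
    obtain ⟨hm3, hm4⟩ := abs_le.mp hm34
    have hm3' : -(3/4 : ℝ) ≤ m := by norm_num at hm3 ⊢; linarith
    have hm4' : m ≤ (3/4 : ℝ) := by norm_num at hm4 ⊢; linarith
    have hroot1 : (2 * c) ^ 3 - 3 * (2 * c) = 2 * m := by rw [hmc]; ring
    have hroot3 : (c + Real.sqrt 3 * s) ^ 3 - 3 * (c + Real.sqrt 3 * s) = -(2 * m) := by
      rw [hmc]
      linear_combination (3 * c * s ^ 2 + Real.sqrt 3 * s ^ 3) * hr3 + (9 * c + 3 * Real.sqrt 3 * s) * hpyth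
    constructor
    · rw [abs_of_nonneg (by linarith)]
      have : (1.38 : ℝ) = 69 / 50 := by norm_num
      rw [this]
      by_contra hcon
      push_neg at hcon
      have hq : 0 ≤ (2 * c) ^ 2 + (69 / 50) * (2 * c) + (69 / 50) ^ 2 - 3 := by nlinarith only [hchalf]
      have hp := mul_nonneg (by linarith : (0:ℝ) ≤ 69 / 50 - 2 * c) hq
      nlinarith only [hp, hroot1, hm3']
    · rw [abs_of_nonpos (by linarith)]
      have : (1.38 : ℝ) = 69 / 50 := by norm_num
      rw [this]
      by_contra hcon
      push_neg at hcon
      have hcon' : c + Real.sqrt 3 * s ≤ 69 / 50 := by linarith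
      have hq : 0 ≤ (c + Real.sqrt 3 * s) ^ 2 + (69 / 50) * (c + Real.sqrt 3 * s) + (69 / 50) ^ 2 - 3 := by nlinarith only [hkey]
      have hp := mul_nonneg (by linarith : (0:ℝ) ≤ 69 / 50 - (c + Real.sqrt 3 * s)) hq
      nlinarith only [hp, hroot3, hm4']

theorem stmt15 (m : ℝ) (hm : |m| ≤ 1) :
    ∃ x₁ x₂ x₃ : ℝ, x₂ ≤ x₁ ∧ x₃ ≤ x₂ ∧
      (∀ x : ℝ, x ^ 3 - 3 * x - 2 * m = (x - x₁) * (x - x₂) * (x - x₃)) ∧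
      (0 ≤ m → Real.sqrt 3 ≤ x₁ ∧ x₁ ≤ 2 ∧ x₃ ≤ -1 ∧
        (x₁ = 2 → m = 1) ∧ (x₃ = -1 → m = 1)) ∧
      (m ≤ 0 → -2 ≤ x₃ ∧ x₃ ≤ -Real.sqrt 3 ∧ 1 ≤ x₁ ∧
        (x₁ = 1 → m = -1) ∧ (x₃ = -2 → m = -1)) ∧
      (|m| ≤ 0.75 → 1.38 < |x₁| ∧ 1.38 < |x₃|) := by
  obtain ⟨hm1, hm2⟩ := abs_le.mp hm
  have hπ : (0:ℝ) < π := Real.pi_pos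
  set φ : ℝ := Real.arccos m / 3 with hφdef
  have hφ0 : 0 ≤ φ := by
    have := Real.arccos_nonneg m; rw [hφdef]; linarith
  have hφπ3 : φ ≤ π / 3 := by
    have := Real.arccos_le_pi m; rw [hφdef]; linarith
  have hs0 : 0 ≤ Real.sin φ := Real.sin_nonneg_of_nonneg_of_le_pi hφ0 (by linarith)
  have hc1 : Real.cos φ ≤ 1 := Real.cos_le_one φ
  have hchalf : 1 / 2 ≤ Real.cos φ := by
    have h := Real.cos_le_cos_of_nonneg_of_le_pi hφ0 (by linarith) hφπ3
    rwa [Real.cos_pi_div_three] at h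
  have hpyth : Real.sin φ ^ 2 + Real.cos φ ^ 2 = 1 := Real.sin_sq_add_cos_sq φ
  have hmc : m = 4 * Real.cos φ ^ 3 - 3 * Real.cos φ := by
    have h3 : Real.cos (3 * φ) = 4 * Real.cos φ ^ 3 - 3 * Real.cos φ := Real.cos_three_mul φ
    have h' : (3 : ℝ) * φ = Real.arccos m := by rw [hφdef]; ring
    rw [h', Real.cos_arccos hm1 hm2] at h3
    exact h3
  exact aux15 m (Real.cos φ) (Real.sin φ) hs0 hchalf hc1 hpyth hmc
end
end
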